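/- arXiv:2602.19632 — 5 statements merged into one kernel-verified Lean document; each statement's English description precedes it below -/
import Mathlib

section
/- In the setting of the sink-source cocycle ε₀ on the root lattice of a simply laced root system (ε₀(α_i,α_j) = c_i^{a_{ij}}, extended bi-multiplicatively, with c_i = -c_j whenever i ≠ j and a_{ij} ≠ 0), for every root α ∈ Φ one has ε₀(α,α) = ε₀(α,-α) = -(-1)^{ht(α)}, where ht(α) is the height of α (the sum of the coefficients of α in the simple root basis). -/
open scoped RealInnerProductSpace

private lemma negOnePow_finsetSum {I : Type*} (s : Finset I) (f : I → ℤ) :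
    (∑ i ∈ s, f i).negOnePow = ∏ i ∈ s, (f i).negOnePow := by
  classical
  induction s using Finset.induction with
  | empty => simp
  | insert _ _ h ih =>
      rw [Finset.sum_insert h, Finset.prod_insert h, Int.negOnePow_add, ih]

/-- In the setting of the sink-source cocycle ε₀ on the root lattice of a simply laced
root system Φ (with simple roots b i, Gram/Cartan matrix a, signs c_i with c_i = -c_j
on edges, ε₀(α_i,α_j) = c_i^{a_{ij}} extended bi-multiplicatively), for every root
α ∈ Φ with coordinate vector n one has ε₀(α,α) = ε₀(α,-α) = -(-1)^{ht(α)} where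
ht(α) = Σ n_i. -/
theorem stmt5 {E I : Type*} [NormedAddCommGroup E] [InnerProductSpace ℝ E] [Fintype I]
    (b : I → E) (hli : LinearIndependent ℝ b)
    (Φ : Set E) (hb : ∀ i, b i ∈ Φ)
    (hnorm : ∀ α ∈ Φ, ⟪α, α⟫ = 2)
    (hneg : ∀ α ∈ Φ, -α ∈ Φ)
    (hint : ∀ α ∈ Φ, ∀ β ∈ Φ, ∃ k : ℤ, ⟪α, β⟫ = k)
    (hrefl : ∀ α ∈ Φ, ∀ β ∈ Φ, β - ⟪α, β⟫ • α ∈ Φ)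
    (a : I → I → ℤ) (hGram : ∀ i j, (a i j : ℝ) = ⟪b i, b j⟫)
    (c : I → ℤˣ) (hsign : ∀ i j, i ≠ j → a i j ≠ 0 → c i = -c j)
    (ε₀ : (I → ℤ) → (I → ℤ) → ℤˣ)
    (hε : ∀ n m : I → ℤ, ε₀ n m = ∏ i, c i ^ (n i * ∑ j, a i j * m j)) :
    ∀ α ∈ Φ, ∀ n : I → ℤ, α = ∑ i, (n i : ℝ) • b i →
      ε₀ n n = -((-1 : ℤˣ) ^ (∑ i, n i)) ∧
      ε₀ n (-n) = -((-1 : ℤˣ) ^ (∑ i, n i)) := by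
  classical
  intro α hα n hn
  -- symmetry and diagonal of the Gram matrix
  have hsym : ∀ i j, a i j = a j i := by
    intro i j
    have : (a i j : ℝ) = (a j i : ℝ) := by
      rw [hGram, hGram, real_inner_comm]
    exact_mod_cast this
  have hdiag : ∀ i, a i i = 2 := by
    intro i
    have : (a i i : ℝ) = 2 := by rw [hGram]; exact hnorm (b i) (hb i)
    exact_mod_cast this
  -- the quadratic form evaluates to 2
  have hsum2 : ∑ i, ∑ j, a i j * (n i * n j) = 2 := by
    have hcast : ((∑ i, ∑ j, a i j * (n i * n j) : ℤ) : ℝ) = ⟪α, α⟫ := by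
      rw [hn, sum_inner]
      push_cast
      refine Finset.sum_congr rfl fun i _ => ?_
      rw [inner_sum]
      refine Finset.sum_congr rfl fun j _ => ?_
      rw [real_inner_smul_left, real_inner_smul_right, ← hGram]
      ring
    have h2 : ((∑ i, ∑ j, a i j * (n i * n j) : ℤ) : ℝ) = ((2 : ℤ) : ℝ) := by
      rw [hcast, hnorm α hα]; norm_num
    exact_mod_cast h2
  -- sign exponents
  set d : I → ℤ := fun i => if c i = 1 then 0 else 1 with hd_def
  have hc : ∀ i, c i = Int.negOnePow (d i) := by
    intro i
    rcases Int.units_eq_one_or (c i) with h | h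
    · rw [h, hd_def]; simp [h]
    · rw [h, hd_def]
      have : ¬ (c i = 1) := by rw [h]; decide
      simp [this]
  have hds : ∀ i j, i ≠ j → a i j ≠ 0 → d i + d j = 1 := by
    intro i j hij haij
    have hcij := hsign i j hij haij
    rcases Int.units_eq_one_or (c i) with h | h
    · have hj : c j = -1 := by
        have : (1 : ℤˣ) = -c j := by rw [← h, hcij]
        rw [eq_comm, neg_eq_iff_eq_neg] at this
        rw [this]
      have hji : ¬ (c j = 1) := by rw [hj]; decide
      simp [hd_def, h, hji]
    · have hj : c j = 1 := by
        have : (-1 : ℤˣ) = -c j := by rw [← h, hcij]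
        have := neg_injective this
        rw [← this]
      have hii : ¬ (c i = 1) := by rw [h]; decide
      simp [hd_def, hii, hj]
  -- the key exponent
  set T : ℤ := ∑ i, d i * (n i * ∑ j, a i j * n j) with hT_def
  -- key: a closed formula for T
  set A : ℤ := ∑ i, d i * (n i * n i) with hA_def
  set B : ℤ := ∑ i, n i * n i with hB_def
  have h2T : 2 * T = 2 + (4 * A - 2 * B) := by
    have hTexp : T = ∑ i, ∑ j, d i * (a i j * (n i * n j)) := by
      rw [hT_def]
      refine Finset.sum_congr rfl fun i _ => ?_
      rw [Finset.mul_sum, Finset.mul_sum]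
      refine Finset.sum_congr rfl fun j _ => ?_
      ring
    have hTexp' : T = ∑ i, ∑ j, d j * (a i j * (n i * n j)) := by
      rw [hTexp, Finset.sum_comm]
      refine Finset.sum_congr rfl fun i _ => Finset.sum_congr rfl fun j _ => ?_
      rw [hsym j i]; ring
    have hsplit : ∑ i, ∑ j, (d i + d j) * (a i j * (n i * n j))
        = (∑ i, ∑ j, a i j * (n i * n j)) + ∑ i, (2 * d i - 1) * (a i i * (n i * n i)) := by
      have : ∀ i, ∑ j, ((d i + d j) * (a i j * (n i * n j)) - a i j * (n i * n j))
          = (2 * d i - 1) * (a i i * (n i * n i)) := by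
        intro i
        rw [Finset.sum_eq_single i]
        · ring
        · intro j _ hji
          by_cases haij : a i j = 0
          · rw [haij]; ring
          · rw [hds i j (Ne.symm hji) haij]; ring
        · intro hi; exact absurd (Finset.mem_univ i) hi
      calc ∑ i, ∑ j, (d i + d j) * (a i j * (n i * n j))
          = ∑ i, ((∑ j, a i j * (n i * n j))
              + ∑ j, ((d i + d j) * (a i j * (n i * n j)) - a i j * (n i * n j))) := by
            refine Finset.sum_congr rfl fun i _ => ?_
            rw [← Finset.sum_add_distrib]
            refine Finset.sum_congr rfl fun j _ => ?_
            ring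
        _ = (∑ i, ∑ j, a i j * (n i * n j)) + ∑ i, (2 * d i - 1) * (a i i * (n i * n i)) := by
            rw [Finset.sum_add_distrib]
            congr 1
            exact Finset.sum_congr rfl fun i _ => this i
    have hdiagsum : ∑ i, (2 * d i - 1) * (a i i * (n i * n i)) = 4 * A - 2 * B := by
      rw [hA_def, hB_def, Finset.mul_sum, Finset.mul_sum, ← Finset.sum_sub_distrib]
      refine Finset.sum_congr rfl fun i _ => ?_
      rw [hdiag i]; ring
    calc 2 * T = T + T := by ring
      _ = ∑ i, ∑ j, (d i + d j) * (a i j * (n i * n j)) := by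
          nth_rewrite 1 [hTexp]
          nth_rewrite 1 [hTexp']
          rw [← Finset.sum_add_distrib]
          refine Finset.sum_congr rfl fun i _ => ?_
          rw [← Finset.sum_add_distrib]
          refine Finset.sum_congr rfl fun j _ => ?_
          ring
      _ = 2 + (4 * A - 2 * B) := by rw [hsplit, hsum2, hdiagsum]
  have hT : T = 1 + (2 * A - B) := by omega
  -- parity of T
  have hpar : Even (T - (1 + ∑ i, n i)) := by
    have h1 : T - (1 + ∑ i, n i) = 2 * A - (B + ∑ i, n i) := by rw [hT]; ring
    have h2 : Even (B + ∑ i, n i) := by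
      rw [hB_def, ← Finset.sum_add_distrib]
      refine Finset.even_sum _ fun i _ => ?_
      have := Int.even_mul_succ_self (n i)
      have h3 : n i * n i + n i = n i * (n i + 1) := by ring
      rw [h3]; exact this
    rw [h1]
    exact (even_two_mul A).sub h2
  -- evaluating ε₀
  have key : ∀ m : I → ℤ, ε₀ n m = Int.negOnePow (∑ i, d i * (n i * ∑ j, a i j * m j)) := by
    intro m
    rw [hε, negOnePow_finsetSum]
    refine Finset.prod_congr rfl fun i _ => ?_
    rw [hc i, Int.negOnePow_def, Int.negOnePow_def, ← zpow_mul]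
  have hnn : ε₀ n n = Int.negOnePow T := key n
  have hnneg : ε₀ n (-n) = Int.negOnePow T := by
    have hsumneg : (∑ i, d i * (n i * ∑ j, a i j * (-n) j)) = -T := by
      rw [hT_def, ← Finset.sum_neg_distrib]
      refine Finset.sum_congr rfl fun i _ => ?_
      simp only [Pi.neg_apply, mul_neg, Finset.sum_neg_distrib]
    rw [key (-n), hsumneg, Int.negOnePow_neg]
  have hfin : Int.negOnePow T = -((-1 : ℤˣ) ^ (∑ i, n i)) := by
    have h := (Int.negOnePow_eq_iff T (1 + ∑ i, n i)).2 hpar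
    rw [h, Int.negOnePow_add, Int.negOnePow_one, Int.negOnePow_def, neg_one_mul]
  exact ⟨hnn.trans hfin, hnneg.trans hfin⟩
end

section
/- Let γ₁, γ₂, γ₃ be roots of a crystallographic root system Φ with γ₁ + γ₂ + γ₃ = 0. Then (q_{γ₁,γ₂}+1)/⟨γ₃,γ₃⟩ = (q_{γ₂,γ₃}+1)/⟨γ₁,γ₁⟩ = (q_{γ₃,γ₁}+1)/⟨γ₂,γ₂⟩, where q_{α,β} = max{m ≥ 0 : β - mα ∈ Φ}. -/
open scoped RealInnerProductSpace

section CasselmanAux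

variable {E : Type*} [NormedAddCommGroup E] [InnerProductSpace ℝ E]

private lemma rsip {x : E} (h : x ≠ 0) : 0 < ⟪x, x⟫ :=
  lt_of_le_of_ne real_inner_self_nonneg (fun hh => h (inner_self_eq_zero.1 hh.symm))

/-- strict Cauchy–Schwarz for a non-multiple pair -/
private lemma scs (u v : E) (hv : v ≠ 0) (h : ∀ t : ℝ, u ≠ t • v) :
    ⟪u, v⟫ ^ 2 < ⟪u, u⟫ * ⟪v, v⟫ := by
  have hvv : 0 < ⟪v, v⟫ := rsip hv
  set t : ℝ := ⟪u, v⟫ / ⟪v, v⟫ with ht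
  have hw : u - t • v ≠ 0 := fun hh => h t (by rwa [sub_eq_zero] at hh)
  have hpos : 0 < ⟪u - t • v, u - t • v⟫ := rsip hw
  have hexp : ⟪u - t • v, u - t • v⟫ =
      ⟪u, u⟫ - 2 * t * ⟪u, v⟫ + t ^ 2 * ⟪v, v⟫ := by
    simp only [inner_sub_left, inner_sub_right, real_inner_smul_right, real_inner_smul_left,
      real_inner_comm v u]
    ring
  rw [hexp] at hpos
  have h1 : t * ⟪v, v⟫ = ⟪u, v⟫ := by
    rw [ht]; field_simp
  nlinarith [hpos, hvv]

private lemma ratio_mem (Φ : Set E) (h0 : (0 : E) ∉ Φ)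
    (hint : ∀ α ∈ Φ, ∀ β ∈ Φ, ∃ k : ℤ, 2 * ⟪α, β⟫ / ⟪α, α⟫ = k)
    {α : E} (hα : α ∈ Φ) {s : ℝ} (hs : s • α ∈ Φ) :
    s = 1 ∨ s = -1 ∨ s = 2 ∨ s = -2 ∨ s = 1/2 ∨ s = -1/2 := by
  have hα0 : α ≠ 0 := fun h => h0 (h ▸ hα)
  have ha : 0 < ⟪α, α⟫ := rsip hα0
  have hs0 : s ≠ 0 := by
    rintro rfl; rw [zero_smul] at hs; exact h0 hs
  obtain ⟨k1, hk1⟩ := hint α hα (s • α) hs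
  obtain ⟨k2, hk2⟩ := hint (s • α) hs α hα
  rw [real_inner_smul_right] at hk1
  rw [real_inner_smul_left, real_inner_smul_left, real_inner_smul_right] at hk2
  have hk1' : (k1 : ℝ) = 2 * s := by
    field_simp at hk1
    have := mul_right_cancel₀ ha.ne'
      (show (2 * s) * ⟪α, α⟫ = (k1 : ℝ) * ⟪α, α⟫ by rw [hk1])
    linarith
  have hk2' : (k2 : ℝ) * s = 2 := by
    field_simp at hk2
    have h2 : s * (s * ⟪α, α⟫) ≠ 0 := by positivity
    have h3 : s * ⟪α, α⟫ ≠ 0 := mul_ne_zero hs0 ha.ne'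
    have := mul_right_cancel₀ h3
      (show ((k2 : ℝ) * s) * (s * ⟪α, α⟫) = 2 * (s * ⟪α, α⟫) by linear_combination (-(s * ⟪α, α⟫)) * hk2)
    linarith
  have hprod : k1 * k2 = 4 := by
    have : ((k1 * k2 : ℤ) : ℝ) = 4 := by
      push_cast
      calc (k1:ℝ) * k2 = (2 * s) * k2 := by rw [hk1']
        _ = 2 * ((k2:ℝ) * s) := by ring
        _ = 4 := by rw [hk2']; norm_num
    exact_mod_cast this
  have h4 : k1 ∣ 4 := ⟨k2, hprod.symm⟩
  have hub : k1 ≤ 4 := Int.le_of_dvd (by norm_num) h4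
  have hlb : -4 ≤ k1 := by
    have := Int.le_of_dvd (show (0:ℤ) < 4 by norm_num) ((neg_dvd).mpr h4)
    linarith
  interval_cases k1 <;> push_cast at hk1' <;>
    first
      | (exfalso; omega)
      | (left; linarith)
      | (right; left; linarith)
      | (right; right; left; linarith)
      | (right; right; right; left; linarith)
      | (right; right; right; right; left; linarith)
      | (right; right; right; right; right; linarith)

private lemma exists_greatest (Φ : Set E) (hfin : Φ.Finite) (u v : E) (hv : v ≠ 0)
    (hu : u ∈ Φ) : ∃ Q : ℕ, IsGreatest {m : ℕ | u + (m : ℝ) • v ∈ Φ} Q := by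
  set S := {m : ℕ | u + (m : ℝ) • v ∈ Φ} with hS
  have hSne : 0 ∈ S := by simp [hS, hu]
  have hSfin : S.Finite := by
    have heq : S = (fun m : ℕ => u + (m : ℝ) • v) ⁻¹' Φ := rfl
    rw [heq]
    apply Set.Finite.preimage _ hfin
    intro m _ n _ h
    have h2 : ((m : ℝ) - n) • v = 0 := by
      rw [sub_smul, sub_eq_zero]
      exact add_left_cancel h
    have h3 : (m : ℝ) - n = 0 := by
      rcases smul_eq_zero.1 h2 with h' | h'
      · exact h'
      · exact absurd h' hv
    have : (m : ℝ) = n := by linarith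
    exact_mod_cast this
  exact ⟨sSup S, Nat.sSup_mem ⟨0, hSne⟩ hSfin.bddAbove,
    fun m hm => le_csSup hSfin.bddAbove hm⟩

private lemma string_facts (Φ : Set E) (h0 : (0 : E) ∉ Φ)
    (hint : ∀ α ∈ Φ, ∀ β ∈ Φ, ∃ k : ℤ, 2 * ⟪α, β⟫ / ⟪α, α⟫ = k)
    (hrefl : ∀ α ∈ Φ, ∀ β ∈ Φ, β - (2 * ⟪α, β⟫ / ⟪α, α⟫) • α ∈ Φ)
    {u v : E} (hu : u ∈ Φ) (hv : v ∈ Φ) (hlin : ∀ t : ℝ, u ≠ t • v)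
    {P Q : ℕ} (hP : IsGreatest {m : ℕ | u - (m : ℝ) • v ∈ Φ} P)
    (hQ : IsGreatest {m : ℕ | u + (m : ℝ) • v ∈ Φ} Q)
    {n : ℤ} (hn : 2 * ⟪v, u⟫ / ⟪v, v⟫ = n) :
    n = (P : ℤ) - Q ∧ (P : ℤ) + Q ≤ 3 := by
  have hv0 : v ≠ 0 := fun h => h0 (h ▸ hv)
  have hvv : 0 < ⟪v, v⟫ := rsip hv0
  have hnv : 2 * ⟪v, u⟫ = (n : ℝ) * ⟪v, v⟫ := by
    rw [div_eq_iff hvv.ne'] at hn; linarith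
  have refl_mem : ∀ k : ℝ, u + k • v ∈ Φ → u - ((n : ℝ) + k) • v ∈ Φ := by
    intro k hk
    have hr := hrefl v hv (u + k • v) hk
    have hc : 2 * ⟪v, u + k • v⟫ / ⟪v, v⟫ = (n : ℝ) + 2 * k := by
      rw [inner_add_right, real_inner_smul_right]
      field_simp
      linarith [hnv]
    rw [hc] at hr
    have he : u + k • v - ((n : ℝ) + 2 * k) • v = u - ((n : ℝ) + k) • v := by
      module
    rwa [he] at hr
  have hd : n = (P : ℤ) - Q := by
    have h1 : n + (Q : ℤ) ≤ P := by
      rcases le_or_gt 0 (n + (Q : ℤ)) with hge | hlt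
      · have hm := refl_mem Q hQ.1
        have h' : ((n + (Q:ℤ)).toNat : ℤ) = n + Q := Int.toNat_of_nonneg hge
        have hcast : (((n + (Q:ℤ)).toNat : ℕ) : ℝ) = (n : ℝ) + Q := by
          exact_mod_cast congrArg (fun z : ℤ => (z : ℝ)) h'
        have hmem : (n + (Q:ℤ)).toNat ∈ {m : ℕ | u - (m : ℝ) • v ∈ Φ} := by
          rw [Set.mem_setOf_eq, hcast]; exact hm
        have := hP.2 hmem
        omega
      · omega
    have h2 : (P : ℤ) - n ≤ Q := by
      have hm0 : u + (-(P:ℝ)) • v ∈ Φ := by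
        have h' := hP.1
        rw [Set.mem_setOf_eq] at h'
        have he : u + (-(P:ℝ)) • v = u - (P : ℝ) • v := by module
        rwa [he]
      have hm := refl_mem (-(P:ℝ)) hm0
      have he : u - ((n : ℝ) + -(P:ℝ)) • v = u + (((P:ℤ) - n : ℤ) : ℝ) • v := by
        push_cast; module
      rw [he] at hm
      rcases le_or_gt 0 ((P : ℤ) - n) with hge | hlt
      · have h' : (((P:ℤ) - n).toNat : ℤ) = (P:ℤ) - n := Int.toNat_of_nonneg hge
        have hcast : ((((P:ℤ) - n).toNat : ℕ) : ℝ) = (((P:ℤ) - n : ℤ) : ℝ) := by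
          exact_mod_cast congrArg (fun z : ℤ => (z : ℝ)) h'
        have hmem : ((P:ℤ) - n).toNat ∈ {m : ℕ | u + (m : ℝ) • v ∈ Φ} := by
          rw [Set.mem_setOf_eq, hcast]; exact hm
        have := hQ.2 hmem
        omega
      · omega
    omega
  refine ⟨hd, ?_⟩
  by_contra hcon
  push_neg at hcon
  set w := u + (Q : ℝ) • v with hw
  have hwΦ : w ∈ Φ := hQ.1
  have hw0 : w ≠ 0 := fun h => h0 (h ▸ hwΦ)
  have hww : 0 < ⟪w, w⟫ := rsip hw0
  have hvw : 2 * ⟪v, w⟫ = (((P : ℤ) + Q : ℤ) : ℝ) * ⟪v, v⟫ := by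
    rw [hw, inner_add_right, real_inner_smul_right]
    have hnr : (n : ℝ) = (P : ℝ) - Q := by exact_mod_cast congrArg (fun z : ℤ => (z : ℝ)) hd
    push_cast
    nlinarith [hnv, hnr]
  have hPQ4 : (4 : ℝ) ≤ (((P : ℤ) + Q : ℤ) : ℝ) := by exact_mod_cast hcon
  have hvwpos : 0 < ⟪v, w⟫ := by nlinarith [hvv]
  obtain ⟨m, hm⟩ := hint w hwΦ v hv
  rw [div_eq_iff hww.ne'] at hm
  have hmv : 2 * ⟪v, w⟫ = (m : ℝ) * ⟪w, w⟫ := by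
    rw [← real_inner_comm w v] at hm; linarith
  have hm1 : 1 ≤ m := by
    have hmr : 0 < (m : ℝ) := by nlinarith [hww, hvwpos]
    have : 0 < m := by exact_mod_cast hmr
    omega
  have hwlin : ∀ t : ℝ, w ≠ t • v := by
    intro t hteq
    apply hlin (t - Q)
    rw [sub_smul, ← hteq, hw]
    abel
  have hcs : ⟪v, w⟫ ^ 2 < ⟪v, v⟫ * ⟪w, w⟫ := by
    have h' := scs w v hv0 hwlin
    have hco : ⟪w, v⟫ = ⟪v, w⟫ := real_inner_comm v w
    nlinarith [h', hco]
  have hkey : (((P : ℤ) + Q : ℤ) : ℝ) * (m : ℝ) * (⟪v, v⟫ * ⟪w, w⟫) < 4 * (⟪v, v⟫ * ⟪w, w⟫) := by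
    have h1 : (((P : ℤ) + Q : ℤ) : ℝ) * (m : ℝ) * (⟪v, v⟫ * ⟪w, w⟫)
        = (2 * ⟪v, w⟫) * (2 * ⟪v, w⟫) := by
      calc (((P : ℤ) + Q : ℤ) : ℝ) * (m : ℝ) * (⟪v, v⟫ * ⟪w, w⟫)
          = ((((P : ℤ) + Q : ℤ) : ℝ) * ⟪v, v⟫) * ((m : ℝ) * ⟪w, w⟫) := by ring
        _ = (2 * ⟪v, w⟫) * (2 * ⟪v, w⟫) := by rw [← hvw, ← hmv]
    rw [h1]
    nlinarith [hcs]
  have hpos : 0 < ⟪v, v⟫ * ⟪w, w⟫ := by positivity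
  have hprod : ((P : ℤ) + Q) * m < 4 := by
    have := lt_of_mul_lt_mul_right hkey hpos.le
    exact_mod_cast this
  have h4 : (4 : ℤ) ≤ (P : ℤ) + Q := by omega
  have : (4 : ℤ) ≤ ((P : ℤ) + Q) * m := by nlinarith
  omega

private lemma pairClassify (m n : ℤ) (h0 : 0 ≤ m * n) (h3 : m * n ≤ 3)
    (hz : m = 0 ↔ n = 0) :
    (m = 0 ∧ n = 0) ∨ (m = 1 ∧ n = 1) ∨ (m = -1 ∧ n = -1) ∨
    (m = 1 ∧ n = 2) ∨ (m = 2 ∧ n = 1) ∨ (m = -1 ∧ n = -2) ∨ (m = -2 ∧ n = -1) ∨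
    (m = 1 ∧ n = 3) ∨ (m = 3 ∧ n = 1) ∨ (m = -1 ∧ n = -3) ∨ (m = -3 ∧ n = -1) := by
  rcases eq_or_ne m 0 with hm0 | hm0
  · exact Or.inl ⟨hm0, hz.1 hm0⟩
  have hn0 : n ≠ 0 := fun h => hm0 (hz.2 h)
  rcases (by omega : 1 ≤ m ∨ m ≤ -1) with hm1 | hm1
  · have hn1 : 1 ≤ n := by
      by_contra hh
      push_neg at hh
      have h1 : m * n ≤ m * (-1) := mul_le_mul_of_nonneg_left (by omega) (by omega)
      linarith
    have hm3 : m ≤ 3 := by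
      have h1 : m * 1 ≤ m * n := mul_le_mul_of_nonneg_left hn1 (by omega)
      linarith
    have hn3 : n ≤ 3 := by
      have h1 : 1 * n ≤ m * n := mul_le_mul_of_nonneg_right hm1 (by omega)
      linarith
    interval_cases m <;> interval_cases n <;> omega
  · have hn1 : n ≤ -1 := by
      by_contra hh
      push_neg at hh
      have hn1' : 1 ≤ n := by omega
      have h1 : m * n ≤ (-1) * n := mul_le_mul_of_nonneg_right (by omega) (by omega)
      linarith
    have hm3 : -3 ≤ m := by
      have h1 : m * (-1) ≤ m * n := mul_le_mul_of_nonpos_left hn1 (by omega)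
      linarith
    have hn3 : -3 ≤ n := by
      have h1 : (-1) * n ≤ m * n := mul_le_mul_of_nonpos_right hm1 (by omega)
      linarith
    interval_cases m <;> interval_cases n <;> omega

set_option maxHeartbeats 1000000 in
private lemma keyL (Φ : Set E) (hfin : Φ.Finite) (h0 : (0 : E) ∉ Φ)
    (hneg : ∀ α ∈ Φ, -α ∈ Φ)
    (hint : ∀ α ∈ Φ, ∀ β ∈ Φ, ∃ k : ℤ, 2 * ⟪α, β⟫ / ⟪α, α⟫ = k)
    (hrefl : ∀ α ∈ Φ, ∀ β ∈ Φ, β - (2 * ⟪α, β⟫ / ⟪α, α⟫) • α ∈ Φ)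
    (γ₁ γ₂ γ₃ : E) (h1 : γ₁ ∈ Φ) (h2 : γ₂ ∈ Φ) (h3 : γ₃ ∈ Φ)
    (hsum : γ₁ + γ₂ + γ₃ = 0)
    (p₁ p₂ : ℕ)
    (hq1 : IsGreatest {m : ℕ | γ₂ - (m : ℝ) • γ₁ ∈ Φ} p₁)
    (hq2 : IsGreatest {m : ℕ | γ₃ - (m : ℝ) • γ₂ ∈ Φ} p₂) :
    ⟪γ₁, γ₁⟫ * ((p₁ : ℝ) + 1) = ⟪γ₃, γ₃⟫ * ((p₂ : ℝ) + 1) := by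
  have hn1 : γ₁ ≠ 0 := fun h => h0 (h ▸ h1)
  have hn2 : γ₂ ≠ 0 := fun h => h0 (h ▸ h2)
  have hn3 : γ₃ ≠ 0 := fun h => h0 (h ▸ h3)
  have ha : 0 < ⟪γ₁, γ₁⟫ := rsip hn1
  have hb : 0 < ⟪γ₂, γ₂⟫ := rsip hn2
  have hcc : 0 < ⟪γ₃, γ₃⟫ := rsip hn3
  have hg3 : γ₃ = -γ₁ - γ₂ := by
    have h := eq_neg_of_add_eq_zero_right hsum
    rw [h]; abel
  by_cases hcol : ∃ t : ℝ, γ₂ = t • γ₁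
  · -- collinear case
    obtain ⟨t, ht⟩ := hcol
    have hmem : t • γ₁ ∈ Φ := ht ▸ h2
    have hts := ratio_mem Φ h0 hint h1 hmem
    have hg3' : γ₃ = (-(1 + t)) • γ₁ := by rw [hg3, ht]; module
    rcases hts with rfl | rfl | rfl | rfl | rfl | rfl
    · -- t = 1 : γ₂ = γ₁, γ₃ = -2 γ₁
      have hg3'' : γ₃ = (-2 : ℝ) • γ₁ := by rw [hg3']; norm_num
      have h31 : IsGreatest {m : ℕ | γ₂ - (m : ℝ) • γ₁ ∈ Φ} 3 := by
        constructor
        · show γ₂ - ((3 : ℕ) : ℝ) • γ₁ ∈ Φ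
          have he : γ₂ - ((3 : ℕ) : ℝ) • γ₁ = γ₃ := by
            rw [ht, hg3'']; push_cast; module
          rw [he]; exact h3
        · intro m hm
          have hform : γ₂ - (m : ℝ) • γ₁ = ((1 : ℝ) - m) • γ₁ := by rw [ht]; module
          rw [Set.mem_setOf_eq, hform] at hm
          have hsm := ratio_mem Φ h0 hint h1 hm
          by_contra hgt
          push_neg at hgt
          have hm4 : (4 : ℝ) ≤ m := by exact_mod_cast hgt
          rcases hsm with h | h | h | h | h | h <;> linarith
      have hp1 : p₁ = 3 := hq1.unique h31
      have h20 : IsGreatest {m : ℕ | γ₃ - (m : ℝ) • γ₂ ∈ Φ} 0 := by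
        constructor
        · show γ₃ - ((0 : ℕ) : ℝ) • γ₂ ∈ Φ
          simpa using h3
        · intro m hm
          have hform : γ₃ - (m : ℝ) • γ₂ = ((-2 : ℝ) - m) • γ₁ := by
            rw [hg3'', ht]; module
          rw [Set.mem_setOf_eq, hform] at hm
          have hsm := ratio_mem Φ h0 hint h1 hm
          by_contra hgt
          push_neg at hgt
          have hm1 : (1 : ℝ) ≤ m := by exact_mod_cast hgt
          rcases hsm with h | h | h | h | h | h <;> linarith
      have hp2 : p₂ = 0 := hq2.unique h20
      rw [hp1, hp2, hg3'']
      simp [real_inner_smul_left, real_inner_smul_right, norm_smul]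
      ring
    · -- t = -1 : γ₃ = 0, contradiction
      exfalso
      apply hn3
      rw [hg3']; norm_num
    · -- t = 2 : γ₃ = -3 γ₁, impossible
      exfalso
      have hg3'' : γ₃ = (-3 : ℝ) • γ₁ := by rw [hg3']; norm_num
      have hmem3 : (-3 : ℝ) • γ₁ ∈ Φ := hg3'' ▸ h3
      rcases ratio_mem Φ h0 hint h1 hmem3 with h | h | h | h | h | h <;> norm_num at h
    · -- t = -2 : γ₂ = -2 γ₁, γ₃ = γ₁
      have hg3'' : γ₃ = (1 : ℝ) • γ₁ := by rw [hg3']; norm_num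
      have h10 : IsGreatest {m : ℕ | γ₂ - (m : ℝ) • γ₁ ∈ Φ} 0 := by
        constructor
        · show γ₂ - ((0 : ℕ) : ℝ) • γ₁ ∈ Φ
          simpa using h2
        · intro m hm
          have hform : γ₂ - (m : ℝ) • γ₁ = ((-2 : ℝ) - m) • γ₁ := by rw [ht]; module
          rw [Set.mem_setOf_eq, hform] at hm
          have hsm := ratio_mem Φ h0 hint h1 hm
          by_contra hgt
          push_neg at hgt
          have hm1 : (1 : ℝ) ≤ m := by exact_mod_cast hgt
          rcases hsm with h | h | h | h | h | h <;> linarith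
      have hp1 : p₁ = 0 := hq1.unique h10
      have h20 : IsGreatest {m : ℕ | γ₃ - (m : ℝ) • γ₂ ∈ Φ} 0 := by
        constructor
        · show γ₃ - ((0 : ℕ) : ℝ) • γ₂ ∈ Φ
          simpa using h3
        · intro m hm
          have hform : γ₃ - (m : ℝ) • γ₂ = ((1 : ℝ) + 2 * m) • γ₁ := by
            rw [hg3'', ht]; module
          rw [Set.mem_setOf_eq, hform] at hm
          have hsm := ratio_mem Φ h0 hint h1 hm
          by_contra hgt
          push_neg at hgt
          have hm1 : (1 : ℝ) ≤ m := by exact_mod_cast hgt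
          rcases hsm with h | h | h | h | h | h <;> linarith
      have hp2 : p₂ = 0 := hq2.unique h20
      rw [hp1, hp2, hg3'']
      simp [real_inner_smul_left, real_inner_smul_right]
    · -- t = 1/2 : γ₃ = -(3/2) γ₁, impossible
      exfalso
      have hg3'' : γ₃ = (-(3/2) : ℝ) • γ₁ := by rw [hg3']; norm_num
      have hmem3 : (-(3/2) : ℝ) • γ₁ ∈ Φ := hg3'' ▸ h3
      rcases ratio_mem Φ h0 hint h1 hmem3 with h | h | h | h | h | h <;> norm_num at h
    · -- t = -1/2 : γ₂ = -(1/2) γ₁, γ₃ = γ₂, γ₁ = -2 γ₂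
      have hg23 : γ₃ = γ₂ := by rw [hg3', ht]; module
      have hg12 : γ₁ = (-2 : ℝ) • γ₂ := by rw [ht]; module
      have h10 : IsGreatest {m : ℕ | γ₂ - (m : ℝ) • γ₁ ∈ Φ} 0 := by
        constructor
        · show γ₂ - ((0 : ℕ) : ℝ) • γ₁ ∈ Φ
          simpa using h2
        · intro m hm
          have hform : γ₂ - (m : ℝ) • γ₁ = ((1 : ℝ) + 2 * m) • γ₂ := by
            rw [hg12]; module
          rw [Set.mem_setOf_eq, hform] at hm
          have hsm := ratio_mem Φ h0 hint h2 hm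
          by_contra hgt
          push_neg at hgt
          have hm1 : (1 : ℝ) ≤ m := by exact_mod_cast hgt
          rcases hsm with h | h | h | h | h | h <;> linarith
      have hp1 : p₁ = 0 := hq1.unique h10
      have h23 : IsGreatest {m : ℕ | γ₃ - (m : ℝ) • γ₂ ∈ Φ} 3 := by
        constructor
        · show γ₃ - ((3 : ℕ) : ℝ) • γ₂ ∈ Φ
          have he : γ₃ - ((3 : ℕ) : ℝ) • γ₂ = γ₁ := by
            rw [hg23, hg12]; push_cast; module
          rw [he]; exact h1
        · intro m hm
          have hform : γ₃ - (m : ℝ) • γ₂ = ((1 : ℝ) - m) • γ₂ := by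
            rw [hg23]; module
          rw [Set.mem_setOf_eq, hform] at hm
          have hsm := ratio_mem Φ h0 hint h2 hm
          by_contra hgt
          push_neg at hgt
          have hm4 : (4 : ℝ) ≤ m := by exact_mod_cast hgt
          rcases hsm with h | h | h | h | h | h <;> linarith
      have hp2 : p₂ = 3 := hq2.unique h23
      rw [hp1, hp2, hg23, hg12]
      simp [real_inner_smul_left, real_inner_smul_right, norm_smul]
      ring
  · -- generic (non-collinear) case
    have hlin12 : ∀ t : ℝ, γ₂ ≠ t • γ₁ := fun t h => hcol ⟨t, h⟩
    have hlin21 : ∀ t : ℝ, γ₁ ≠ t • γ₂ := by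
      intro t h
      have ht0 : t ≠ 0 := by rintro rfl; rw [zero_smul] at h; exact hn1 h
      exact hlin12 (1/t) (by rw [h, smul_smul, one_div, inv_mul_cancel₀ ht0, one_smul])
    obtain ⟨n1, hn1e⟩ := hint γ₁ h1 γ₂ h2
    obtain ⟨n2, hn2e⟩ := hint γ₂ h2 γ₁ h1
    have hA1 : (n1 : ℝ) * ⟪γ₁, γ₁⟫ = 2 * ⟪γ₁, γ₂⟫ := by
      rw [div_eq_iff ha.ne'] at hn1e; linarith
    have hA2 : (n2 : ℝ) * ⟪γ₂, γ₂⟫ = 2 * ⟪γ₁, γ₂⟫ := by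
      rw [div_eq_iff hb.ne'] at hn2e
      rw [← real_inner_comm γ₂ γ₁] at hn2e
      linarith
    have hc : ⟪γ₃, γ₃⟫ = ⟪γ₁, γ₁⟫ + ⟪γ₂, γ₂⟫ + 2 * ⟪γ₁, γ₂⟫ := by
      rw [hg3]
      simp only [inner_sub_left, inner_sub_right, inner_neg_left, inner_neg_right,
        real_inner_comm γ₁ γ₂]
      ring
    -- the strings
    obtain ⟨Q1, hQ1⟩ := exists_greatest Φ hfin γ₂ γ₁ hn1 h2
    obtain ⟨he1, hb1⟩ := string_facts Φ h0 hint hrefl h2 h1 hlin12 hq1 hQ1 hn1e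
    have hQ1ge : 1 ≤ Q1 := by
      apply hQ1.2
      show γ₂ + ((1 : ℕ) : ℝ) • γ₁ ∈ Φ
      have he : γ₂ + ((1 : ℕ) : ℝ) • γ₁ = -γ₃ := by rw [hg3]; push_cast; module
      rw [he]; exact hneg γ₃ h3
    have hQ2 : IsGreatest {m : ℕ | γ₁ + (m : ℝ) • γ₂ ∈ Φ} (p₂ + 1) := by
      constructor
      · show γ₁ + ((p₂ + 1 : ℕ) : ℝ) • γ₂ ∈ Φ
        have hmem := hq2.1
        rw [Set.mem_setOf_eq] at hmem
        have he : γ₁ + ((p₂ + 1 : ℕ) : ℝ) • γ₂ = -(γ₃ - (p₂ : ℝ) • γ₂) := by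
          rw [hg3]; push_cast; module
        rw [he]; exact hneg _ hmem
      · intro m hm
        rw [Set.mem_setOf_eq] at hm
        cases m with
        | zero => exact Nat.zero_le _
        | succ k =>
          have he : γ₃ - (k : ℝ) • γ₂ = -(γ₁ + ((k + 1 : ℕ) : ℝ) • γ₂) := by
            rw [hg3]; push_cast; module
          have hmem : γ₃ - (k : ℝ) • γ₂ ∈ Φ := by rw [he]; exact hneg _ hm
          have := hq2.2 hmem
          omega
    have hsetP2 : {m : ℕ | γ₁ + (m : ℝ) • (-γ₂) ∈ Φ} = {m : ℕ | γ₁ - (m : ℝ) • γ₂ ∈ Φ} := by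
      ext m; simp [smul_neg, sub_eq_add_neg]
    obtain ⟨P2, hP2⟩ := exists_greatest Φ hfin γ₁ (-γ₂) (neg_ne_zero.mpr hn2) h1
    rw [hsetP2] at hP2
    obtain ⟨he2, hb2⟩ := string_facts Φ h0 hint hrefl h1 h2 hlin21 hP2 hQ2 hn2e
    -- classification of (n1, n2)
    have hprodsq : ((n1 * n2 : ℤ) : ℝ) * (⟪γ₁, γ₁⟫ * ⟪γ₂, γ₂⟫)
        = (2 * ⟪γ₁, γ₂⟫) * (2 * ⟪γ₁, γ₂⟫) := by
      push_cast
      calc (n1 : ℝ) * (n2 : ℝ) * (⟪γ₁, γ₁⟫ * ⟪γ₂, γ₂⟫)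
          = ((n1 : ℝ) * ⟪γ₁, γ₁⟫) * ((n2 : ℝ) * ⟪γ₂, γ₂⟫) := by ring
        _ = (2 * ⟪γ₁, γ₂⟫) * (2 * ⟪γ₁, γ₂⟫) := by rw [hA1, hA2]
    have hab : 0 < ⟪γ₁, γ₁⟫ * ⟪γ₂, γ₂⟫ := mul_pos ha hb
    have h0' : 0 ≤ n1 * n2 := by
      have : (0 : ℝ) ≤ ((n1 * n2 : ℤ) : ℝ) := by
        nlinarith [hprodsq, hab, sq_nonneg (2 * ⟪γ₁, γ₂⟫)]
      exact_mod_cast this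
    have hcs12 : ⟪γ₁, γ₂⟫ ^ 2 < ⟪γ₁, γ₁⟫ * ⟪γ₂, γ₂⟫ := by
      have h' := scs γ₂ γ₁ hn1 hlin12
      have hco : ⟪γ₂, γ₁⟫ = ⟪γ₁, γ₂⟫ := real_inner_comm γ₁ γ₂
      nlinarith [h', hco]
    have h3' : n1 * n2 ≤ 3 := by
      have hlt : ((n1 * n2 : ℤ) : ℝ) < 4 := by
        nlinarith [hprodsq, hab, hcs12]
      have : (n1 * n2 : ℤ) < 4 := by exact_mod_cast hlt
      omega
    have hz : n1 = 0 ↔ n2 = 0 := by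
      constructor
      · intro h
        have hx0 : ⟪γ₁, γ₂⟫ = 0 := by
          rw [h] at hA1; push_cast at hA1; linarith
        have : (n2 : ℝ) * ⟪γ₂, γ₂⟫ = 0 := by rw [hA2, hx0]; ring
        have : (n2 : ℝ) = 0 := by
          rcases mul_eq_zero.1 this with h' | h'
          · exact h'
          · exact absurd h' hb.ne'
        exact_mod_cast this
      · intro h
        have hx0 : ⟪γ₁, γ₂⟫ = 0 := by
          rw [h] at hA2; push_cast at hA2; linarith
        have : (n1 : ℝ) * ⟪γ₁, γ₁⟫ = 0 := by rw [hA1, hx0]; ring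
        have : (n1 : ℝ) = 0 := by
          rcases mul_eq_zero.1 this with h' | h'
          · exact h'
          · exact absurd h' ha.ne'
        exact_mod_cast this
    -- inner product expansions used in several cases
    have hins1 : ⟪γ₃, γ₁⟫ = -⟪γ₁, γ₁⟫ - ⟪γ₁, γ₂⟫ := by
      rw [hg3]
      simp only [inner_sub_left, inner_neg_left, real_inner_comm γ₁ γ₂]
      try ring
    have hins2 : ⟪γ₃, γ₂⟫ = -⟪γ₁, γ₂⟫ - ⟪γ₂, γ₂⟫ := by
      rw [hg3]
      simp only [inner_sub_left, inner_neg_left]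
      try ring
    have hinsub : ⟪γ₂ - (1:ℝ) • γ₁, γ₂⟫ = ⟪γ₂, γ₂⟫ - ⟪γ₁, γ₂⟫ := by
      simp only [inner_sub_left, real_inner_smul_left]
      try ring
    have hinsubw : ⟪γ₂ - (1:ℝ) • γ₁, γ₂ - (1:ℝ) • γ₁⟫
        = ⟪γ₂, γ₂⟫ - 2 * ⟪γ₁, γ₂⟫ + ⟪γ₁, γ₁⟫ := by
      simp only [inner_sub_left, inner_sub_right, real_inner_smul_left, real_inner_smul_right,
        real_inner_comm γ₁ γ₂]
      try ring
    have hinadd : ⟪γ₁ + (2:ℝ) • γ₂, γ₂⟫ = ⟪γ₁, γ₂⟫ + 2 * ⟪γ₂, γ₂⟫ := by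
      simp only [inner_add_left, real_inner_smul_left]
      try ring
    have hinaddw : ⟪γ₁ + (2:ℝ) • γ₂, γ₁ + (2:ℝ) • γ₂⟫
        = ⟪γ₁, γ₁⟫ + 4 * ⟪γ₁, γ₂⟫ + 4 * ⟪γ₂, γ₂⟫ := by
      simp only [inner_add_left, inner_add_right, real_inner_smul_left, real_inner_smul_right,
        real_inner_comm γ₁ γ₂]
      try ring
    rcases pairClassify n1 n2 h0' h3' hz with ⟨e1, e2⟩ | ⟨e1, e2⟩ | ⟨e1, e2⟩ | ⟨e1, e2⟩ |
      ⟨e1, e2⟩ | ⟨e1, e2⟩ | ⟨e1, e2⟩ | ⟨e1, e2⟩ | ⟨e1, e2⟩ | ⟨e1, e2⟩ | ⟨e1, e2⟩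
    · -- (0,0)
      subst e1; subst e2
      push_cast at hA1 hA2
      have hp1 : p₁ = 1 := by omega
      have hp2 : p₂ = 0 := by omega
      obtain ⟨k, hk⟩ := hint γ₃ h3 γ₁ h1
      rw [div_eq_iff hcc.ne'] at hk
      rw [hins1] at hk
      have hx0 : ⟪γ₁, γ₂⟫ = 0 := by linarith
      have hklt : (k : ℝ) < 0 := by nlinarith [hk, hx0, hcc, ha]
      have hkgt : (-2 : ℝ) < k := by nlinarith [hk, hx0, hc, hb, hcc]
      have hk1 : k = -1 := by
        have h1' : k < 0 := by exact_mod_cast hklt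
        have h2' : (-2 : ℤ) < k := by exact_mod_cast hkgt
        omega
      rw [hk1] at hk; push_cast at hk
      rw [hp1, hp2]; push_cast
      linarith [hk, hc, hx0]
    · -- (1,1)
      subst e1; subst e2
      push_cast at hA1 hA2
      have hp1 : p₁ = 2 := by omega
      have hp2 : p₂ = 0 := by omega
      rw [hp1, hp2]; push_cast
      linarith [hc, hA1, hA2]
    · -- (-1,-1)
      subst e1; subst e2
      push_cast at hA1 hA2
      have hCA : ⟪γ₃, γ₃⟫ = ⟪γ₁, γ₁⟫ := by linarith [hc, hA1, hA2]
      rcases (by omega : p₁ = 0 ∨ p₁ = 1) with hp1 | hp1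
      · have hp2 : p₂ = 0 := by
          by_contra hne
          have hp2' : p₂ = 1 := by omega
          have h' := hQ2.1
          rw [Set.mem_setOf_eq, hp2'] at h'
          rw [show γ₁ + ((1 + 1 : ℕ) : ℝ) • γ₂ = γ₁ + (2 : ℝ) • γ₂ by norm_num] at h'
          have hr := hrefl γ₂ h2 _ h'
          have hco : 2 * ⟪γ₂, γ₁ + (2 : ℝ) • γ₂⟫ / ⟪γ₂, γ₂⟫ = 3 := by
            rw [div_eq_iff hb.ne', inner_add_right, real_inner_smul_right,
              ← real_inner_comm γ₂ γ₁]
            linarith [hA2]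
          rw [hco] at hr
          rw [show γ₁ + (2 : ℝ) • γ₂ - (3 : ℝ) • γ₂ = -(γ₂ - (1 : ℝ) • γ₁) by module] at hr
          have hmem := hneg _ hr
          rw [neg_neg] at hmem
          have : (1 : ℕ) ≤ p₁ := by
            apply hq1.2
            show γ₂ - ((1 : ℕ) : ℝ) • γ₁ ∈ Φ
            rw [show γ₂ - ((1 : ℕ) : ℝ) • γ₁ = γ₂ - (1 : ℝ) • γ₁ by norm_num]
            exact hmem
          omega
        rw [hp1, hp2]; push_cast
        linarith [hCA]
      · have h' := hq1.1
        rw [Set.mem_setOf_eq, hp1] at h'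
        rw [show γ₂ - ((1 : ℕ) : ℝ) • γ₁ = γ₂ - (1 : ℝ) • γ₁ by norm_num] at h'
        have hr := hrefl γ₂ h2 _ h'
        have hco : 2 * ⟪γ₂, γ₂ - (1 : ℝ) • γ₁⟫ / ⟪γ₂, γ₂⟫ = 3 := by
          rw [div_eq_iff hb.ne', inner_sub_right, real_inner_smul_right,
            ← real_inner_comm γ₂ γ₁]
          linarith [hA2]
        rw [hco] at hr
        rw [show γ₂ - (1 : ℝ) • γ₁ - (3 : ℝ) • γ₂ = -(γ₁ + (2 : ℝ) • γ₂) by module] at hr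
        have hmem := hneg _ hr
        rw [neg_neg] at hmem
        have hge : (2 : ℕ) ≤ p₂ + 1 := by
          apply hQ2.2
          show γ₁ + ((2 : ℕ) : ℝ) • γ₂ ∈ Φ
          rw [show γ₁ + ((2 : ℕ) : ℝ) • γ₂ = γ₁ + (2 : ℝ) • γ₂ by norm_num]
          exact hmem
        have hp2 : p₂ = 1 := by omega
        rw [hp1, hp2]; push_cast
        linarith [hCA]
    · -- (1,2) impossible
      subst e1; subst e2
      push_cast at hA1 hA2
      exfalso
      obtain ⟨k, hk⟩ := hint γ₃ h3 γ₂ h2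
      rw [div_eq_iff hcc.ne', hins2] at hk
      have hXB : ⟪γ₁, γ₂⟫ = ⟪γ₂, γ₂⟫ := by linarith [hA2]
      have hAB : ⟪γ₁, γ₁⟫ = 2 * ⟪γ₂, γ₂⟫ := by linarith [hA1, hXB]
      have hCB : ⟪γ₃, γ₃⟫ = 5 * ⟪γ₂, γ₂⟫ := by linarith [hc, hXB, hAB]
      rw [hXB, hCB] at hk
      have h5 : (k : ℝ) * 5 = -4 := by
        apply mul_right_cancel₀ hb.ne'
        linear_combination -hk
      have hki : (5 * k : ℤ) = -4 := by
        exact_mod_cast (show ((5 * k : ℤ) : ℝ) = -4 by push_cast; linarith [h5])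
      omega
    · -- (2,1) impossible
      subst e1; subst e2
      push_cast at hA1 hA2
      exfalso
      obtain ⟨k, hk⟩ := hint γ₃ h3 γ₁ h1
      rw [div_eq_iff hcc.ne', hins1] at hk
      have hXA : ⟪γ₁, γ₂⟫ = ⟪γ₁, γ₁⟫ := by linarith [hA1]
      have hBA : ⟪γ₂, γ₂⟫ = 2 * ⟪γ₁, γ₁⟫ := by linarith [hA2, hXA]
      have hCA : ⟪γ₃, γ₃⟫ = 5 * ⟪γ₁, γ₁⟫ := by linarith [hc, hXA, hBA]
      rw [hXA, hCA] at hk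
      have h5 : (k : ℝ) * 5 = -4 := by
        apply mul_right_cancel₀ ha.ne'
        linear_combination -hk
      have hki : (5 * k : ℤ) = -4 := by
        exact_mod_cast (show ((5 * k : ℤ) : ℝ) = -4 by push_cast; linarith [h5])
      omega
    · -- (-1,-2)
      subst e1; subst e2
      push_cast at hA1 hA2
      have hXB : ⟪γ₁, γ₂⟫ = -⟪γ₂, γ₂⟫ := by linarith [hA2]
      have hAB : ⟪γ₁, γ₁⟫ = 2 * ⟪γ₂, γ₂⟫ := by linarith [hA1, hXB]
      have hCB : ⟪γ₃, γ₃⟫ = ⟪γ₂, γ₂⟫ := by linarith [hc, hXB, hAB]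
      have hp2 : p₂ = 1 := by omega
      have hp1 : p₁ = 0 := by
        by_contra hne
        have hp1' : p₁ = 1 := by omega
        have h' := hq1.1
        rw [Set.mem_setOf_eq, hp1'] at h'
        rw [show γ₂ - ((1 : ℕ) : ℝ) • γ₁ = γ₂ - (1 : ℝ) • γ₁ by norm_num] at h'
        have hwne : γ₂ - (1 : ℝ) • γ₁ ≠ 0 := fun h => h0 (h ▸ h')
        have hww : 0 < ⟪γ₂ - (1 : ℝ) • γ₁, γ₂ - (1 : ℝ) • γ₁⟫ := rsip hwne
        obtain ⟨k, hk⟩ := hint _ h' γ₂ h2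
        rw [div_eq_iff hww.ne', hinsub, hinsubw] at hk
        rw [hXB, hAB] at hk
        have h5 : (k : ℝ) * 5 = 4 := by
          apply mul_right_cancel₀ hb.ne'
          linear_combination -hk
        have hki : (5 * k : ℤ) = 4 := by
          exact_mod_cast (show ((5 * k : ℤ) : ℝ) = 4 by push_cast; linarith [h5])
        omega
      rw [hp1, hp2]; push_cast
      linarith [hAB, hCB]
    · -- (-2,-1)
      subst e1; subst e2
      push_cast at hA1 hA2
      have hXA : ⟪γ₁, γ₂⟫ = -⟪γ₁, γ₁⟫ := by linarith [hA1]
      have hBA : ⟪γ₂, γ₂⟫ = 2 * ⟪γ₁, γ₁⟫ := by linarith [hA2, hXA]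
      have hCA : ⟪γ₃, γ₃⟫ = ⟪γ₁, γ₁⟫ := by linarith [hc, hXA, hBA]
      have hp1 : p₁ = 0 := by omega
      have hp2 : p₂ = 0 := by
        by_contra hne
        have hp2' : p₂ = 1 := by omega
        have h' := hQ2.1
        rw [Set.mem_setOf_eq, hp2'] at h'
        rw [show γ₁ + ((1 + 1 : ℕ) : ℝ) • γ₂ = γ₁ + (2 : ℝ) • γ₂ by norm_num] at h'
        have hwne : γ₁ + (2 : ℝ) • γ₂ ≠ 0 := fun h => h0 (h ▸ h')
        have hww : 0 < ⟪γ₁ + (2 : ℝ) • γ₂, γ₁ + (2 : ℝ) • γ₂⟫ := rsip hwne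
        obtain ⟨k, hk⟩ := hint _ h' γ₂ h2
        rw [div_eq_iff hww.ne', hinadd, hinaddw] at hk
        rw [hXA, hBA] at hk
        have h5 : (k : ℝ) * 5 = 6 := by
          apply mul_right_cancel₀ ha.ne'
          linear_combination -hk
        have hki : (5 * k : ℤ) = 6 := by
          exact_mod_cast (show ((5 * k : ℤ) : ℝ) = 6 by push_cast; linarith [h5])
        omega
      rw [hp1, hp2]; push_cast
      linarith [hCA]
    · -- (1,3) impossible
      subst e1; subst e2
      push_cast at hA1 hA2
      exfalso
      obtain ⟨k, hk⟩ := hint γ₃ h3 γ₂ h2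
      rw [div_eq_iff hcc.ne', hins2] at hk
      have h2X : 2 * ⟪γ₁, γ₂⟫ = 3 * ⟪γ₂, γ₂⟫ := by linarith [hA2]
      have hAB : ⟪γ₁, γ₁⟫ = 3 * ⟪γ₂, γ₂⟫ := by linarith [hA1, h2X]
      have hCB : ⟪γ₃, γ₃⟫ = 7 * ⟪γ₂, γ₂⟫ := by linarith [hc, h2X, hAB]
      rw [hCB] at hk
      have h7 : (k : ℝ) * 7 = -5 := by
        apply mul_right_cancel₀ hb.ne'
        linear_combination -hk - h2X
      have hki : (7 * k : ℤ) = -5 := by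
        exact_mod_cast (show ((7 * k : ℤ) : ℝ) = -5 by push_cast; linarith [h7])
      omega
    · -- (3,1) impossible
      subst e1; subst e2
      push_cast at hA1 hA2
      exfalso
      obtain ⟨k, hk⟩ := hint γ₃ h3 γ₁ h1
      rw [div_eq_iff hcc.ne', hins1] at hk
      have h2X : 2 * ⟪γ₁, γ₂⟫ = 3 * ⟪γ₁, γ₁⟫ := by linarith [hA1]
      have hBA : ⟪γ₂, γ₂⟫ = 3 * ⟪γ₁, γ₁⟫ := by linarith [hA2, h2X]
      have hCA : ⟪γ₃, γ₃⟫ = 7 * ⟪γ₁, γ₁⟫ := by linarith [hc, h2X, hBA]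
      rw [hCA] at hk
      have h7 : (k : ℝ) * 7 = -5 := by
        apply mul_right_cancel₀ ha.ne'
        linear_combination -hk - h2X
      have hki : (7 * k : ℤ) = -5 := by
        exact_mod_cast (show ((7 * k : ℤ) : ℝ) = -5 by push_cast; linarith [h7])
      omega
    · -- (-1,-3)
      subst e1; subst e2
      push_cast at hA1 hA2
      have h2XB : 2 * ⟪γ₁, γ₂⟫ = -3 * ⟪γ₂, γ₂⟫ := by linarith [hA2]
      have hAB : ⟪γ₁, γ₁⟫ = 3 * ⟪γ₂, γ₂⟫ := by linarith [hA1, h2XB]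
      have hCB : ⟪γ₃, γ₃⟫ = ⟪γ₂, γ₂⟫ := by linarith [hc, h2XB, hAB]
      have hp2 : p₂ = 2 := by omega
      have hp1 : p₁ = 0 := by
        by_contra hne
        have hp1' : p₁ = 1 := by omega
        have h' := hq1.1
        rw [Set.mem_setOf_eq, hp1'] at h'
        rw [show γ₂ - ((1 : ℕ) : ℝ) • γ₁ = γ₂ - (1 : ℝ) • γ₁ by norm_num] at h'
        have hwne : γ₂ - (1 : ℝ) • γ₁ ≠ 0 := fun h => h0 (h ▸ h')
        have hww : 0 < ⟪γ₂ - (1 : ℝ) • γ₁, γ₂ - (1 : ℝ) • γ₁⟫ := rsip hwne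
        obtain ⟨k, hk⟩ := hint _ h' γ₂ h2
        rw [div_eq_iff hww.ne', hinsub, hinsubw] at hk
        rw [hAB] at hk
        have h7 : (k : ℝ) * 7 = 5 := by
          apply mul_right_cancel₀ hb.ne'
          linear_combination -hk + (k : ℝ) * h2XB - h2XB
        have hki : (7 * k : ℤ) = 5 := by
          exact_mod_cast (show ((7 * k : ℤ) : ℝ) = 5 by push_cast; linarith [h7])
        omega
      rw [hp1, hp2]; push_cast
      linarith [hAB, hCB]
    · -- (-3,-1)
      subst e1; subst e2
      push_cast at hA1 hA2
      have h2XA : 2 * ⟪γ₁, γ₂⟫ = -3 * ⟪γ₁, γ₁⟫ := by linarith [hA1]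
      have hBA : ⟪γ₂, γ₂⟫ = 3 * ⟪γ₁, γ₁⟫ := by linarith [hA2, h2XA]
      have hCA : ⟪γ₃, γ₃⟫ = ⟪γ₁, γ₁⟫ := by linarith [hc, h2XA, hBA]
      have hp1 : p₁ = 0 := by omega
      have hp2 : p₂ = 0 := by
        by_contra hne
        have hp2' : p₂ = 1 := by omega
        have h' := hQ2.1
        rw [Set.mem_setOf_eq, hp2'] at h'
        rw [show γ₁ + ((1 + 1 : ℕ) : ℝ) • γ₂ = γ₁ + (2 : ℝ) • γ₂ by norm_num] at h'
        have hwne : γ₁ + (2 : ℝ) • γ₂ ≠ 0 := fun h => h0 (h ▸ h')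
        have hww : 0 < ⟪γ₁ + (2 : ℝ) • γ₂, γ₁ + (2 : ℝ) • γ₂⟫ := rsip hwne
        obtain ⟨k, hk⟩ := hint _ h' γ₂ h2
        rw [div_eq_iff hww.ne', hinadd, hinaddw] at hk
        rw [hBA] at hk
        have h7 : (k : ℝ) * 7 = 9 := by
          apply mul_right_cancel₀ ha.ne'
          linear_combination -hk + h2XA - 2 * (k : ℝ) * h2XA
        have hki : (7 * k : ℤ) = 9 := by
          exact_mod_cast (show ((7 * k : ℤ) : ℝ) = 9 by push_cast; linarith [h7])
        omega
      rw [hp1, hp2]; push_cast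
      linarith [hCA]

end CasselmanAux

/-- (Casselman) Let γ₁, γ₂, γ₃ be roots of a crystallographic root system Φ with
γ₁ + γ₂ + γ₃ = 0.  Then (q_{γ₁,γ₂}+1)/⟨γ₃,γ₃⟩ = (q_{γ₂,γ₃}+1)/⟨γ₁,γ₁⟩
= (q_{γ₃,γ₁}+1)/⟨γ₂,γ₂⟩, where q_{α,β} = max{m ≥ 0 : β - mα ∈ Φ}. -/
theorem stmt8 {E : Type*} [NormedAddCommGroup E] [InnerProductSpace ℝ E]
    (Φ : Set E) (hfin : Φ.Finite) (h0 : (0 : E) ∉ Φ)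
    (hneg : ∀ α ∈ Φ, -α ∈ Φ)
    (hint : ∀ α ∈ Φ, ∀ β ∈ Φ, ∃ k : ℤ, 2 * ⟪α, β⟫ / ⟪α, α⟫ = k)
    (hrefl : ∀ α ∈ Φ, ∀ β ∈ Φ, β - (2 * ⟪α, β⟫ / ⟪α, α⟫) • α ∈ Φ)
    (γ₁ γ₂ γ₃ : E) (h1 : γ₁ ∈ Φ) (h2 : γ₂ ∈ Φ) (h3 : γ₃ ∈ Φ)
    (hsum : γ₁ + γ₂ + γ₃ = 0)
    (q12 q23 q31 : ℕ)
    (hq12 : IsGreatest {m : ℕ | γ₂ - m • γ₁ ∈ Φ} q12)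
    (hq23 : IsGreatest {m : ℕ | γ₃ - m • γ₂ ∈ Φ} q23)
    (hq31 : IsGreatest {m : ℕ | γ₁ - m • γ₃ ∈ Φ} q31) :
    ((q12 : ℝ) + 1) / ⟪γ₃, γ₃⟫ = ((q23 : ℝ) + 1) / ⟪γ₁, γ₁⟫ ∧
    ((q23 : ℝ) + 1) / ⟪γ₁, γ₁⟫ = ((q31 : ℝ) + 1) / ⟪γ₂, γ₂⟫ := by
  have hset : ∀ u v : E, {m : ℕ | u - (m : ℝ) • v ∈ Φ} = {m : ℕ | u - m • v ∈ Φ} := by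
    intro u v
    ext m
    rw [Set.mem_setOf_eq, Set.mem_setOf_eq, Nat.cast_smul_eq_nsmul]
  have hq12' : IsGreatest {m : ℕ | γ₂ - (m : ℝ) • γ₁ ∈ Φ} q12 := by
    rw [hset]; exact hq12
  have hq23' : IsGreatest {m : ℕ | γ₃ - (m : ℝ) • γ₂ ∈ Φ} q23 := by
    rw [hset]; exact hq23
  have hq31' : IsGreatest {m : ℕ | γ₁ - (m : ℝ) • γ₃ ∈ Φ} q31 := by
    rw [hset]; exact hq31
  have hn1 : γ₁ ≠ 0 := fun h => h0 (h ▸ h1)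
  have hn2 : γ₂ ≠ 0 := fun h => h0 (h ▸ h2)
  have hn3 : γ₃ ≠ 0 := fun h => h0 (h ▸ h3)
  have ha : 0 < ⟪γ₁, γ₁⟫ := rsip hn1
  have hb : 0 < ⟪γ₂, γ₂⟫ := rsip hn2
  have hcc : 0 < ⟪γ₃, γ₃⟫ := rsip hn3
  have hsum2 : γ₂ + γ₃ + γ₁ = 0 := by
    rw [show γ₂ + γ₃ + γ₁ = γ₁ + γ₂ + γ₃ from by abel, hsum]
  have key1 := keyL Φ hfin h0 hneg hint hrefl γ₁ γ₂ γ₃ h1 h2 h3 hsum q12 q23 hq12' hq23'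
  have key2 := keyL Φ hfin h0 hneg hint hrefl γ₂ γ₃ γ₁ h2 h3 h1 hsum2 q23 q31 hq23' hq31'
  constructor
  · rw [div_eq_div_iff hcc.ne' ha.ne']
    linear_combination key1
  · rw [div_eq_div_iff ha.ne' hb.ne']
    linear_combination key2
end

section
/- Let g be a simple Lie algebra with a special Chevalley system {e_α : α ∈ Φ} (i.e., [e_{α_i}, e_{-α_i}] = h_i and there are signs c_i ∈ {±1} such that [e_{α_i}, e_α] = c_i(q_{α_i,α}+1) e_{α+α_i} for α ∈ Φ⁺ with α+α_i ∈ Φ, and [e_{-α_i}, e_α] = c_i(p_{α_i,α}+1) e_{α-α_i} for α ∈ Φ⁻ with α-α_i ∈ Φ). Then for any i ≠ j in I with a_{ij} ≠ 0, one has c_i = -c_j. -/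
/-- Let g be a simple Lie algebra over ℂ with a special Chevalley system {e_α}
(with simple roots s i, signs c_i ∈ {±1}).  Then for i ≠ j with a_{ij} ≠ 0 one has
c_i = -c_j. -/
theorem stmt9 {E L I : Type*} [AddCommGroup E] [Module ℝ E]
    [LieRing L] [LieAlgebra ℂ L]
    (Φ Φp : Set E) (hsub : Φp ⊆ Φ)
    (hsplit : ∀ β, β ∈ Φ ↔ β ∈ Φp ∨ -β ∈ Φp)
    (s : I → E) (hs : ∀ i, s i ∈ Φp)
    (e : E → L) (hcor : I → L)
    (he : ∀ β ∈ Φ, e β ≠ 0)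
    (q p : E → E → ℕ)
    (hq : ∀ β ∈ Φ, ∀ γ ∈ Φ, IsGreatest {m : ℕ | γ - m • β ∈ Φ} (q β γ))
    (hp : ∀ β ∈ Φ, ∀ γ ∈ Φ, IsGreatest {m : ℕ | γ + m • β ∈ Φ} (p β γ))
    (c : I → ℤ) (hc : ∀ i, c i = 1 ∨ c i = -1)
    (hco : ∀ i, ⁅e (s i), e (-(s i))⁆ = hcor i)
    (ha : ∀ i, ∀ β ∈ Φp, β + s i ∈ Φ →
      ⁅e (s i), e β⁆ = ((c i * ((q (s i) β : ℤ) + 1) : ℤ) : ℂ) • e (β + s i))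
    (hb : ∀ i, ∀ β ∈ Φ, -β ∈ Φp → β - s i ∈ Φ →
      ⁅e (-(s i)), e β⁆ = ((c i * ((p (s i) β : ℤ) + 1) : ℤ) : ℂ) • e (β - s i))
    (a : I → I → ℤ)
    (hdiff : ∀ i j, i ≠ j → s i - s j ∉ Φ)
    (haij : ∀ i j, i ≠ j → a i j = (q (s i) (s j) : ℤ) - p (s i) (s j))
    (hstring : ∀ i, ∀ β ∈ Φ, ∀ m : ℕ, m ≤ p (s i) β → β + m • s i ∈ Φ)
    (i j : I) (hij : i ≠ j) (hne : a i j ≠ 0) :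
    c i = -c j := by
  have hsiΦ : s i ∈ Φ := hsub (hs i)
  have hsjΦ : s j ∈ Φ := hsub (hs j)
  -- q (s i) (s j) = 0
  have hqz : ∀ k l : I, k ≠ l → q (s k) (s l) = 0 := by
    intro k l hkl
    by_contra hq0
    obtain ⟨m, hm⟩ : ∃ m, q (s k) (s l) = m + 1 := ⟨q (s k) (s l) - 1, by omega⟩
    have hγ : s l - q (s k) (s l) • s k ∈ Φ := (hq (s k) (hsub (hs k)) (s l) (hsub (hs l))).1
    set γ := s l - q (s k) (s l) • s k with hγdef
    have hmem : q (s k) (s l) ∈ {m : ℕ | γ + m • s k ∈ Φ} := by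
      have : γ + q (s k) (s l) • s k = s l := by rw [hγdef]; abel
      simpa [this] using hsub (hs l)
    have hle : q (s k) (s l) ≤ p (s k) γ := (hp (s k) (hsub (hs k)) γ hγ).2 hmem
    have h1 : γ + m • s k ∈ Φ := hstring k γ hγ m (by omega)
    have h2 : γ + m • s k = s l - s k := by
      rw [hγdef, hm, add_smul, one_smul]; abel
    rw [h2] at h1
    exact hdiff l k hkl.symm h1
  have hpij : 1 ≤ p (s i) (s j) := by
    have := haij i j hij
    rw [hqz i j hij] at this
    omega
  have hΦ : s j + s i ∈ Φ := by
    have := hstring i (s j) hsjΦ 1 hpij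
    simpa using this
  have hΦ' : s i + s j ∈ Φ := by rwa [add_comm]
  have e1 := ha i (s j) (hs j) hΦ
  have e2 := ha j (s i) (hs i) hΦ'
  have hskew : ⁅e (s i), e (s j)⁆ = -⁅e (s j), e (s i)⁆ := (lie_skew _ _).symm
  rw [e1, e2, add_comm (s i) (s j)] at hskew
  have hsum : (((c i * ((q (s i) (s j) : ℤ) + 1) + c j * ((q (s j) (s i) : ℤ) + 1) : ℤ) : ℂ))
      • e (s j + s i) = 0 := by
    rw [Int.cast_add, add_smul, hskew]
    simp
  have hz : ((c i * ((q (s i) (s j) : ℤ) + 1) + c j * ((q (s j) (s i) : ℤ) + 1) : ℤ) : ℂ) = 0 :=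
    (smul_eq_zero.mp hsum).resolve_right (he _ hΦ)
  have hz' : c i * ((q (s i) (s j) : ℤ) + 1) + c j * ((q (s j) (s i) : ℤ) + 1) = 0 := by
    exact_mod_cast hz
  rw [hqz i j hij, hqz j i hij.symm] at hz'
  rcases hc i with h1 | h1 <;> rcases hc j with h2 | h2 <;> omega
end

section
/- In type A_r, with the alternating orientation where vertex i is a source iff i is even (so the oriented edge set is Î = {(2,1),(2,3),(4,3),(4,5),...}), define ρ⃗(α,β) = -Σ_{(i,j)∈Î} n_i m_j for α = Σ n_i α_i, β = Σ m_j α_j in the root lattice. Then for positive roots α, β with α + β a root, ρ⃗(α,β) - ρ⃗(β,α) ∈ {1, -1}. -/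
/-- The positive root α_{ij} = α_i + ... + α_{j-1} of type A_r, in simple-root
coordinates. -/
def Aroot (i j : ℕ) : ℕ → ℤ := fun t => if i ≤ t ∧ t < j then 1 else 0

/-- The set of roots of type A_r. -/
def PhiA (r : ℕ) : Set (ℕ → ℤ) :=
  {v | ∃ i j, 1 ≤ i ∧ i < j ∧ j ≤ r + 1 ∧ (v = Aroot i j ∨ v = -Aroot i j)}

/-- The set of positive roots of type A_r. -/
def PhiAPos (r : ℕ) : Set (ℕ → ℤ) :=
  {v | ∃ i j, 1 ≤ i ∧ i < j ∧ j ≤ r + 1 ∧ v = Aroot i j}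

/-- ρ⃗(α,β) = -Σ_{(i,j)∈Î} n_i m_j for the alternating orientation of type A_r,
where Î consists of the pairs (i,j) with 1 ≤ i,j ≤ r, i even and |i - j| = 1. -/
def rhoA (r : ℕ) (v w : ℕ → ℤ) : ℤ :=
  -∑ i ∈ Finset.Icc 1 r, ∑ j ∈ Finset.Icc 1 r,
    if i % 2 = 0 ∧ (j = i + 1 ∨ i = j + 1) then v i * w j else 0

lemma key (r i j l : ℕ) (h1 : 1 ≤ i) (h2 : i < j) (h3 : j < l) (h4 : l ≤ r + 1) :
    rhoA r (Aroot i j) (Aroot j l) - rhoA r (Aroot j l) (Aroot i j) = 1 ∨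
    rhoA r (Aroot i j) (Aroot j l) - rhoA r (Aroot j l) (Aroot i j) = -1 := by
  have hjm : j ∈ Finset.Icc 1 r := by simp [Finset.mem_Icc]; omega
  have hj1m : j - 1 ∈ Finset.Icc 1 r := by simp [Finset.mem_Icc]; omega
  unfold rhoA
  rw [neg_sub_neg, ← Finset.sum_sub_distrib]
  simp_rw [← Finset.sum_sub_distrib]
  rcases Nat.even_or_odd j with hj | hj
  · left
    have hpt : ∀ p ∈ Finset.Icc 1 r, ∀ q ∈ Finset.Icc 1 r,
        ((if p % 2 = 0 ∧ (q = p + 1 ∨ p = q + 1) then Aroot j l p * Aroot i j q else 0) -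
         (if p % 2 = 0 ∧ (q = p + 1 ∨ p = q + 1) then Aroot i j p * Aroot j l q else 0))
        = if p = j ∧ q = j - 1 then 1 else 0 := by
      intro p hp q hq
      simp only [Finset.mem_Icc] at hp hq
      have hje : j % 2 = 0 := Nat.even_iff.mp hj
      simp only [Aroot]
      split_ifs <;> omega
    rw [Finset.sum_congr rfl (fun p hp => Finset.sum_congr rfl (fun q hq => hpt p hp q hq))]
    rw [Finset.sum_eq_single_of_mem j hjm]
    · rw [Finset.sum_eq_single_of_mem (j-1) hj1m]
      · simp
      · intro b _ hb; simp [hb]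
    · intro p _ hp
      apply Finset.sum_eq_zero
      intro q _
      simp [hp]
  · right
    have hpt : ∀ p ∈ Finset.Icc 1 r, ∀ q ∈ Finset.Icc 1 r,
        ((if p % 2 = 0 ∧ (q = p + 1 ∨ p = q + 1) then Aroot j l p * Aroot i j q else 0) -
         (if p % 2 = 0 ∧ (q = p + 1 ∨ p = q + 1) then Aroot i j p * Aroot j l q else 0))
        = if p = j - 1 ∧ q = j then -1 else 0 := by
      intro p hp q hq
      simp only [Finset.mem_Icc] at hp hq
      have hje : j % 2 = 1 := Nat.odd_iff.mp hj
      simp only [Aroot]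
      split_ifs <;> omega
    rw [Finset.sum_congr rfl (fun p hp => Finset.sum_congr rfl (fun q hq => hpt p hp q hq))]
    rw [Finset.sum_eq_single_of_mem (j-1) hj1m]
    · rw [Finset.sum_eq_single_of_mem j hjm]
      · simp
      · intro b _ hb; simp [hb]
    · intro p _ hp
      apply Finset.sum_eq_zero
      intro q _
      simp [hp]

/-- In type A_r with the alternating orientation, for positive roots α, β with
α + β a root, ρ⃗(α,β) - ρ⃗(β,α) ∈ {1, -1}. -/
theorem stmt14 (r : ℕ) (α β : ℕ → ℤ)
    (hα : α ∈ PhiAPos r) (hβ : β ∈ PhiAPos r) (hs : α + β ∈ PhiA r) :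
    rhoA r α β - rhoA r β α = 1 ∨ rhoA r α β - rhoA r β α = -1 := by
  obtain ⟨i, j, hi1, hij, hjr, rfl⟩ := hα
  obtain ⟨k, l, hk1, hkl, hlr, rfl⟩ := hβ
  obtain ⟨a, b, ha1, hab, hbr, hor⟩ := hs
  have hpos : Aroot i j + Aroot k l = Aroot a b := by
    rcases hor with h | h
    · exact h
    · exfalso
      have hi := congrFun h i
      simp only [Aroot, Pi.add_apply, Pi.neg_apply] at hi
      split_ifs at hi <;> omega
  have Ht : ∀ t, (if i ≤ t ∧ t < j then (1:ℤ) else 0) + (if k ≤ t ∧ t < l then (1:ℤ) else 0)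
      = (if a ≤ t ∧ t < b then (1:ℤ) else 0) := by
    intro t
    have := congrFun hpos t
    simpa only [Aroot, Pi.add_apply] using this
  have hcase : j = k ∨ l = i := by
    have hia : a ≤ i ∧ i < b := by have h := Ht i; split_ifs at h <;> omega
    have hka : a ≤ k ∧ k < b := by have h := Ht k; split_ifs at h <;> omega
    by_contra hc
    push_neg at hc
    rcases le_or_gt j k with hjk | hjk
    · have h := Ht j; split_ifs at h <;> omega
    · rcases le_or_gt l i with hli | hli
      · have h := Ht l; split_ifs at h <;> omega
      · rcases le_total i k with h' | h'
        · have h := Ht k; split_ifs at h <;> omega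
        · have h := Ht i; split_ifs at h <;> omega
  rcases hcase with rfl | rfl
  · exact key r i j l hi1 hij hkl hlr
  · rcases key r k l j hk1 hkl hij hjr with h | h
    · right; omega
    · left; omega
end

section
/- In type A_r with the alternating orientation (Î = {(2,1),(2,3),(4,3),(4,5),...}) and ρ⃗(α,β) = -Σ_{(i,j)∈Î} n_i m_j, for positive roots α_{ij} and α_{kl} (1 ≤ i < j ≤ r+1, 1 ≤ k < l ≤ r+1) whose sum is a root, one has ρ⃗(α_{ij}, α_{kl}) = 0 if (k = j and j is even) or (l = i and i is odd), and ρ⃗(α_{ij}, α_{kl}) = -1 if (k = j and j is odd) or (l = i and i is even). -/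
lemma rho_eq_zero (r : ℕ) (v w : ℕ → ℤ)
    (h : ∀ x y : ℕ, x ∈ Finset.Icc 1 r → y ∈ Finset.Icc 1 r → x % 2 = 0 →
      (y = x + 1 ∨ x = y + 1) → v x * w y = 0) :
    rhoA r v w = 0 := by
  unfold rhoA
  rw [neg_eq_zero]
  apply Finset.sum_eq_zero
  intro x hx
  apply Finset.sum_eq_zero
  intro y hy
  split_ifs with hc
  · exact h x y hx hy hc.1 hc.2
  · rfl

lemma rho_eq_neg_one (r a b : ℕ) (v w : ℕ → ℤ)
    (ha : a ∈ Finset.Icc 1 r) (hb : b ∈ Finset.Icc 1 r)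
    (hp : a % 2 = 0) (hadj : b = a + 1 ∨ a = b + 1)
    (hv : v a * w b = 1)
    (h0 : ∀ x y : ℕ, x ∈ Finset.Icc 1 r → y ∈ Finset.Icc 1 r → x % 2 = 0 →
      (y = x + 1 ∨ x = y + 1) → (x ≠ a ∨ y ≠ b) → v x * w y = 0) :
    rhoA r v w = -1 := by
  unfold rhoA
  rw [neg_eq_iff_eq_neg, neg_neg]
  rw [Finset.sum_eq_single_of_mem a ha]
  · rw [Finset.sum_eq_single_of_mem b hb]
    · rw [if_pos ⟨hp, hadj⟩]; exact hv
    · intro y hy hne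
      split_ifs with hc
      · exact h0 a y ha hy hc.1 hc.2 (Or.inr hne)
      · rfl
  · intro x hx hne
    apply Finset.sum_eq_zero
    intro y hy
    split_ifs with hc
    · exact h0 x y hx hy hc.1 hc.2 (Or.inl hne)
    · rfl

/-- In type A_r with the alternating orientation, for positive roots α_{ij}, α_{kl}
whose sum is a root: ρ⃗(α_{ij}, α_{kl}) = 0 if (k = j and j is even) or (l = i and
i is odd), and ρ⃗(α_{ij}, α_{kl}) = -1 if (k = j and j is odd) or (l = i and i is
even). -/
theorem stmt15 (r i j k l : ℕ) (h1 : 1 ≤ i) (h2 : i < j) (h3 : j ≤ r + 1)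
    (h4 : 1 ≤ k) (h5 : k < l) (h6 : l ≤ r + 1)
    (hroot : Aroot i j + Aroot k l ∈ PhiA r) :
    (((k = j ∧ Even j) ∨ (l = i ∧ Odd i)) → rhoA r (Aroot i j) (Aroot k l) = 0) ∧
    (((k = j ∧ Odd j) ∨ (l = i ∧ Even i)) → rhoA r (Aroot i j) (Aroot k l) = -1) := by
  constructor
  · rintro (⟨hk, he⟩ | ⟨hl, ho⟩)
    · rw [Nat.even_iff] at he
      apply rho_eq_zero
      intro x y hx hy hpar hadj
      simp only [Finset.mem_Icc] at hx hy
      simp only [Aroot]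
      split_ifs with c1 c2 <;> try ring
      omega
    · rw [Nat.odd_iff] at ho
      apply rho_eq_zero
      intro x y hx hy hpar hadj
      simp only [Finset.mem_Icc] at hx hy
      simp only [Aroot]
      split_ifs with c1 c2 <;> try ring
      omega
  · rintro (⟨hk, ho⟩ | ⟨hl, he⟩)
    · rw [Nat.odd_iff] at ho
      apply rho_eq_neg_one r (j - 1) j
      · simp only [Finset.mem_Icc]; omega
      · simp only [Finset.mem_Icc]; omega
      · omega
      · left; omega
      · simp only [Aroot]
        rw [if_pos (by omega : i ≤ j - 1 ∧ j - 1 < j), if_pos (by omega : k ≤ j ∧ j < l)]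
        ring
      · intro x y hx hy hpar hadj hne
        simp only [Finset.mem_Icc] at hx hy
        simp only [Aroot]
        split_ifs with c1 c2 <;> try ring
        omega
    · rw [Nat.even_iff] at he
      apply rho_eq_neg_one r i (i - 1)
      · simp only [Finset.mem_Icc]; omega
      · simp only [Finset.mem_Icc]; omega
      · omega
      · right; omega
      · simp only [Aroot]
        rw [if_pos (by omega : i ≤ i ∧ i < j), if_pos (by omega : k ≤ i - 1 ∧ i - 1 < l)]
        ring
      · intro x y hx hy hpar hadj hne
        simp only [Finset.mem_Icc] at hx hy
        simp only [Aroot]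
        split_ifs with c1 c2 <;> try ring
        omega
end
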